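/- arXiv:math/0303178 — 2 statements merged into one kernel-verified Lean document; each statement's English description precedes it below -/
import Mathlib

section
/- For τ in the upper half plane and q = exp(2πiτ), the Jacobi theta function ϑ_τ(z) = ∑_{m=-∞}^∞ q^{m²/2} exp(2πimz) satisfies the triple product identity ϑ_τ(z) = (q; q)_∞ · (-q^{1/2} e^{2πiz}; q)_∞ · (-q^{1/2} e^{-2πiz}; q)_∞. -/
open scoped Real

/-- The infinite q-Pochhammer symbol `(a;q)_∞ = ∏_{j=0}^∞ (1 - a q^j)`. -/
noncomputable def qPochInf (a q : ℂ) : ℂ := ∏' n : ℕ, (1 - a * q ^ n)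

open Filter Finset Complex Topology

noncomputable def qfac (q : ℂ) (n : ℕ) : ℂ := ∏ j ∈ Finset.range n, (1 - q ^ (j + 1))

noncomputable def Bq (q : ℂ) (n : ℕ) (k : ℤ) : ℂ :=
  if 0 ≤ k ∧ k ≤ n then qfac q n / (qfac q k.toNat * qfac q (n - k.toNat)) else 0

lemma one_sub_pow_ne {q : ℂ} (hq : ‖q‖ < 1) (j : ℕ) : (1 : ℂ) - q ^ (j + 1) ≠ 0 := by
  intro h
  have h1 : q ^ (j+1) = 1 := by linear_combination -h
  have h2 : ‖q ^ (j+1)‖ < 1 := by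
    rw [norm_pow]; exact pow_lt_one₀ (norm_nonneg q) hq (Nat.succ_ne_zero j)
  rw [h1, norm_one] at h2; exact lt_irrefl 1 h2

lemma qfac_ne_zero {q : ℂ} (hq : ‖q‖ < 1) (n : ℕ) : qfac q n ≠ 0 :=
  Finset.prod_ne_zero_iff.2 fun j _ => one_sub_pow_ne hq j

lemma qfac_zero (q : ℂ) : qfac q 0 = 1 := by simp [qfac]

lemma qfac_succ (q : ℂ) (n : ℕ) : qfac q (n + 1) = qfac q n * (1 - q ^ (n + 1)) :=
  Finset.prod_range_succ _ _

lemma Bq_zero_left {q : ℂ} (hq : ‖q‖ < 1) (n : ℕ) : Bq q n 0 = 1 := by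
  simp [Bq, qfac_zero, div_self (qfac_ne_zero hq n)]

lemma Bq_top {q : ℂ} (hq : ‖q‖ < 1) (n : ℕ) : Bq q n n = 1 := by
  simp [Bq, qfac_zero, Int.toNat_natCast, div_self (qfac_ne_zero hq n)]

lemma Bq_neg {q : ℂ} {k : ℤ} (hk : k < 0) (n : ℕ) : Bq q n k = 0 := by
  simp [Bq, not_le.2 hk]

lemma Bq_gt {q : ℂ} {k : ℤ} {n : ℕ} (hk : (n : ℤ) < k) : Bq q n k = 0 := by
  simp only [Bq, ite_eq_right_iff]
  exact fun h => absurd h.2 (not_le.2 hk)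

lemma Bq_nat {q : ℂ} (n a : ℕ) (h : a ≤ n) :
    Bq q n a = qfac q n / (qfac q a * qfac q (n - a)) := by
  simp [Bq, Int.toNat_natCast, Int.ofNat_le.2 h]

lemma pascal_a {q : ℂ} (hq : ‖q‖ < 1) (n : ℕ) (k : ℤ) :
    Bq q (n + 1) k = Bq q n (k - 1) + q ^ k * Bq q n k := by
  rcases lt_trichotomy k 0 with hk | hk | hk
  · rw [Bq_neg hk, Bq_neg (by omega), Bq_neg hk]; ring
  · subst hk
    rw [Bq_zero_left hq, Bq_zero_left hq, Bq_neg (by omega)]; simp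
  · rcases le_or_gt k n with hkn | hkn
    · -- main case : 1 ≤ k ≤ n
      obtain ⟨c, rfl⟩ : ∃ c : ℕ, k = (c : ℤ) + 1 := ⟨(k - 1).toNat, by omega⟩
      obtain ⟨b, rfl⟩ : ∃ b : ℕ, n = c + 1 + b := ⟨n - (c + 1), by omega⟩
      have e1 : ((c : ℤ) + 1) = ((c + 1 : ℕ) : ℤ) := by push_cast; ring
      have e2 : ((c : ℤ) + 1 - 1) = ((c : ℕ) : ℤ) := by push_cast; ring
      rw [e2, e1, Bq_nat _ _ (by omega), Bq_nat _ _ (by omega), Bq_nat _ _ (by omega),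
        zpow_natCast]
      have h1 : c + 1 + b + 1 - (c + 1) = b + 1 := by omega
      have h2 : c + 1 + b - c = b + 1 := by omega
      have h3 : c + 1 + b - (c + 1) = b := by omega
      rw [h1, h2, h3]
      have E : qfac q (c + 1 + b + 1) = qfac q (c + 1 + b) * (1 - q ^ (c + 1 + b + 1)) :=
        qfac_succ q _
      rw [E, qfac_succ q c, qfac_succ q b]
      have n1 := qfac_ne_zero hq (c + 1 + b)
      have n2 := qfac_ne_zero hq c
      have n3 := qfac_ne_zero hq b
      have n4 := one_sub_pow_ne hq c
      have n5 := one_sub_pow_ne hq b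
      field_simp
      ring
    · rcases eq_or_lt_of_le (by omega : (n : ℤ) + 1 ≤ k) with hk1 | hk1
      · subst hk1
        rw [show ((n : ℤ) + 1) = (((n + 1 : ℕ) : ℤ)) by push_cast; ring, Bq_top hq,
          show (((n + 1 : ℕ) : ℤ)) - 1 = ((n : ℕ) : ℤ) by push_cast; ring, Bq_top hq,
          Bq_gt (by omega)]
        ring
      · rw [Bq_gt (by omega), Bq_gt (by omega), Bq_gt (by omega)]; ring

lemma pascal_b {q : ℂ} (hq : ‖q‖ < 1) (n : ℕ) (k : ℤ) :
    Bq q (n + 1) k = q ^ ((n : ℤ) + 1 - k) * Bq q n (k - 1) + Bq q n k := by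
  rcases lt_trichotomy k 0 with hk | hk | hk
  · rw [Bq_neg hk, Bq_neg (by omega), Bq_neg hk]; ring
  · subst hk
    rw [Bq_zero_left hq, Bq_zero_left hq, Bq_neg (by omega)]; simp
  · rcases le_or_gt k n with hkn | hkn
    · obtain ⟨c, rfl⟩ : ∃ c : ℕ, k = (c : ℤ) + 1 := ⟨(k - 1).toNat, by omega⟩
      obtain ⟨b, rfl⟩ : ∃ b : ℕ, n = c + 1 + b := ⟨n - (c + 1), by omega⟩
      have e1 : ((c : ℤ) + 1) = ((c + 1 : ℕ) : ℤ) := by push_cast; ring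
      have e2 : ((c : ℤ) + 1 - 1) = ((c : ℕ) : ℤ) := by push_cast; ring
      have e3 : ((c + 1 + b : ℕ) : ℤ) + 1 - ((c : ℤ) + 1) = ((b + 1 : ℕ) : ℤ) := by
        push_cast; ring
      rw [e2, e3, e1, Bq_nat _ _ (by omega), Bq_nat _ _ (by omega), Bq_nat _ _ (by omega),
        zpow_natCast]
      have h1 : c + 1 + b + 1 - (c + 1) = b + 1 := by omega
      have h2 : c + 1 + b - c = b + 1 := by omega
      have h3 : c + 1 + b - (c + 1) = b := by omega
      rw [h1, h2, h3]
      have E : qfac q (c + 1 + b + 1) = qfac q (c + 1 + b) * (1 - q ^ (c + 1 + b + 1)) :=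
        qfac_succ q _
      rw [E, qfac_succ q c, qfac_succ q b]
      have n1 := qfac_ne_zero hq (c + 1 + b)
      have n2 := qfac_ne_zero hq c
      have n3 := qfac_ne_zero hq b
      have n4 := one_sub_pow_ne hq c
      have n5 := one_sub_pow_ne hq b
      field_simp
      ring
    · rcases eq_or_lt_of_le (by omega : (n : ℤ) + 1 ≤ k) with hk1 | hk1
      · subst hk1
        rw [show ((n : ℤ) + 1) = (((n + 1 : ℕ) : ℤ)) by push_cast; ring, Bq_top hq,
          show (((n + 1 : ℕ) : ℤ)) - 1 = ((n : ℕ) : ℤ) by push_cast; ring, Bq_top hq,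
          Bq_gt (by omega)]
        simp
      · rw [Bq_gt (by omega), Bq_gt (by omega), Bq_gt (by omega)]; ring

lemma Bq_rec {q : ℂ} (hq : ‖q‖ < 1) (hq0 : q ≠ 0) (N : ℕ) (m : ℤ) :
    Bq q (2 * N + 2) ((N : ℤ) + 1 + m) =
      (1 + q ^ (2 * N + 1)) * Bq q (2 * N) ((N : ℤ) + m)
      + q ^ ((N : ℤ) + 1 - m) * Bq q (2 * N) ((N : ℤ) + m - 1)
      + q ^ ((N : ℤ) + 1 + m) * Bq q (2 * N) ((N : ℤ) + m + 1) := by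
  have h1 := pascal_a hq (2 * N + 1) ((N : ℤ) + 1 + m)
  have h2 := pascal_b hq (2 * N) ((N : ℤ) + m)
  have h3 := pascal_b hq (2 * N) ((N : ℤ) + 1 + m)
  rw [show ((N : ℤ) + 1 + m - 1) = (N : ℤ) + m by ring] at h1
  rw [show ((2 * N : ℕ) : ℤ) + 1 - ((N : ℤ) + m) = (N : ℤ) + 1 - m by push_cast; ring,
    show ((N : ℤ) + m - 1) = (N : ℤ) + m - 1 by ring] at h2
  rw [show ((2 * N : ℕ) : ℤ) + 1 - ((N : ℤ) + 1 + m) = (N : ℤ) - m by push_cast; ring,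
    show ((N : ℤ) + 1 + m - 1) = (N : ℤ) + m by ring] at h3
  have key : q ^ ((N : ℤ) + 1 + m) * q ^ ((N : ℤ) - m) = q ^ ((2 * N : ℕ) + 1) := by
    rw [← zpow_add₀ hq0, show ((N : ℤ) + 1 + m + ((N : ℤ) - m)) = ((2 * N + 1 : ℕ) : ℤ) by
      push_cast; ring, zpow_natCast]
  have h4 : (2 * N + 2) = (2 * N + 1) + 1 := rfl
  rw [show ((N : ℤ) + m + 1) = (N : ℤ) + 1 + m by ring, h4, h1, h2, h3]
  linear_combination Bq q (2 * N) ((N : ℤ) + m) * key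

lemma QXmul (Q x : ℂ) (hQ0 : Q ≠ 0) (hx0 : x ≠ 0) (a b c d : ℤ) :
    Q^a * x^b * (Q^c * x^d) = Q^(a+c) * x^(b+d) := by
  rw [zpow_add₀ hQ0, zpow_add₀ hx0]; ring

/-- summand of the theta-like finite sum -/
noncomputable def jf (Q x : ℂ) (N : ℕ) (m : ℤ) : ℂ :=
  Bq (Q ^ 2) (2 * N) ((N : ℤ) + m) * (Q ^ (m ^ 2) * x ^ m)

lemma jf_eq_zero {Q x : ℂ} {N : ℕ} {m : ℤ} (hm : m ∉ Finset.Icc (-(N : ℤ)) (N : ℤ)) :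
    jf Q x N m = 0 := by
  rw [Finset.mem_Icc, not_and_or] at hm
  rcases hm with hm | hm
  · rw [jf, Bq_neg (by omega), zero_mul]
  · rw [jf, Bq_gt (by push_cast; omega), zero_mul]

lemma jf_summable (Q x : ℂ) (N : ℕ) : Summable (jf Q x N) :=
  summable_of_ne_finset_zero fun _ hm => jf_eq_zero hm

lemma jf_rec {Q x : ℂ} (hQ : ‖Q‖ < 1) (hQ0 : Q ≠ 0) (hx0 : x ≠ 0) (N : ℕ) (m : ℤ) :
    jf Q x (N + 1) m = (1 + Q ^ (4 * N + 2)) * jf Q x N m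
      + (Q ^ (2 * N + 1) * x) * jf Q x N (m - 1)
      + (Q ^ (2 * N + 1) * x⁻¹) * jf Q x N (m + 1) := by
  have hq2 : ‖(Q : ℂ) ^ 2‖ < 1 := by
    rw [norm_pow]; exact pow_lt_one₀ (norm_nonneg Q) hQ two_ne_zero
  have hq20 : (Q : ℂ) ^ 2 ≠ 0 := pow_ne_zero 2 hQ0
  have hb := Bq_rec hq2 hq20 N m
  have c1 : ((N + 1 : ℕ) : ℤ) + m = (N : ℤ) + 1 + m := by push_cast; ring
  have c2 : 2 * (N + 1) = 2 * N + 2 := by ring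
  rw [jf, c1, c2, hb]
  have e2 : ((Q ^ 2 : ℂ)) ^ ((N : ℤ) + 1 - m) * (Q ^ (m ^ 2) * x ^ m)
      = (Q ^ (2 * N + 1) * x) * (Q ^ ((m - 1) ^ 2) * x ^ (m - 1)) := by
    have h : ((Q : ℂ) ^ (2 * N + 1) * x) * (Q ^ ((m - 1) ^ 2) * x ^ (m - 1))
        = Q ^ ((2 * N + 1 : ℕ) : ℤ) * x ^ (1 : ℤ) * (Q ^ ((m - 1) ^ 2) * x ^ (m - 1)) := by
      rw [zpow_natCast, zpow_one]
    rw [h, QXmul Q x hQ0 hx0, ← zpow_natCast Q 2, ← zpow_mul, ← mul_assoc, ← zpow_add₀ hQ0,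
      show x ^ m = x ^ (0 + m) by ring_nf]
    congr 1
    · congr 1; push_cast; ring
    · congr 1; ring
  have e3 : ((Q ^ 2 : ℂ)) ^ ((N : ℤ) + 1 + m) * (Q ^ (m ^ 2) * x ^ m)
      = (Q ^ (2 * N + 1) * x⁻¹) * (Q ^ ((m + 1) ^ 2) * x ^ (m + 1)) := by
    have h : ((Q : ℂ) ^ (2 * N + 1) * x⁻¹) * (Q ^ ((m + 1) ^ 2) * x ^ (m + 1))
        = Q ^ ((2 * N + 1 : ℕ) : ℤ) * x ^ (-1 : ℤ) * (Q ^ ((m + 1) ^ 2) * x ^ (m + 1)) := by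
      rw [zpow_natCast, zpow_neg_one]
    rw [h, QXmul Q x hQ0 hx0, ← zpow_natCast Q 2, ← zpow_mul, ← mul_assoc, ← zpow_add₀ hQ0,
      show x ^ m = x ^ (-1 + (m + 1)) by ring_nf]
    congr 1
    congr 1
    push_cast; ring
  have e4 : ((Q ^ 2 : ℂ)) ^ (2 * N + 1) = Q ^ (4 * N + 2) := by ring
  rw [jf, jf, jf, show (N : ℤ) + (m - 1) = (N : ℤ) + m - 1 by ring,
    show (N : ℤ) + (m + 1) = (N : ℤ) + m + 1 by ring]
  linear_combination Bq (Q ^ 2) (2 * N) ((N : ℤ) + m - 1) * e2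
    + Bq (Q ^ 2) (2 * N) ((N : ℤ) + m + 1) * e3
    + Bq (Q ^ 2) (2 * N) ((N : ℤ) + m) * (Q ^ (m ^ 2) * x ^ m) * e4

/-- The finite Jacobi triple product identity. -/
lemma finite_jtp {Q x : ℂ} (hQ : ‖Q‖ < 1) (hQ0 : Q ≠ 0) (hx0 : x ≠ 0) (N : ℕ) :
    ∏ n ∈ Finset.range N, ((1 + x * Q ^ (2 * n + 1)) * (1 + x⁻¹ * Q ^ (2 * n + 1)))
      = ∑' m : ℤ, jf Q x N m := by
  have hq2 : ‖(Q : ℂ) ^ 2‖ < 1 := by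
    rw [norm_pow]; exact pow_lt_one₀ (norm_nonneg Q) hQ two_ne_zero
  induction N with
  | zero =>
      rw [Finset.prod_range_zero, tsum_eq_single 0 ?h]
      · rw [jf]
        simp [Bq_zero_left hq2]
      · intro m hm
        rcases lt_trichotomy m 0 with h | h | h
        · rw [jf, Bq_neg (by omega), zero_mul]
        · exact absurd h hm
        · rw [jf, Bq_gt (by omega), zero_mul]
  | succ N ih =>
      rw [Finset.prod_range_succ, ih]
      have key : ∀ m : ℤ, jf Q x (N + 1) m = (1 + Q ^ (4 * N + 2)) * jf Q x N m
          + (Q ^ (2 * N + 1) * x) * jf Q x N (m - 1)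
          + (Q ^ (2 * N + 1) * x⁻¹) * jf Q x N (m + 1) := jf_rec hQ hQ0 hx0 N
      have s1 : Summable (fun m : ℤ => (1 + Q ^ (4 * N + 2)) * jf Q x N m) :=
        (jf_summable Q x N).mul_left _
      have s2 : Summable (fun m : ℤ => (Q ^ (2 * N + 1) * x) * jf Q x N (m - 1)) :=
        summable_of_ne_finset_zero (s := Finset.Icc (-(N : ℤ) - 1) ((N : ℤ) + 1))
          fun m hm => by
            rw [jf_eq_zero (by simp only [Finset.mem_Icc] at hm ⊢; omega), mul_zero]
      have s3 : Summable (fun m : ℤ => (Q ^ (2 * N + 1) * x⁻¹) * jf Q x N (m + 1)) :=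
        summable_of_ne_finset_zero (s := Finset.Icc (-(N : ℤ) - 1) ((N : ℤ) + 1))
          fun m hm => by
            rw [jf_eq_zero (by simp only [Finset.mem_Icc] at hm ⊢; omega), mul_zero]
      have hre : (∑' m : ℤ, jf Q x N (m - 1)) = ∑' m : ℤ, jf Q x N m :=
        (Equiv.subRight (1 : ℤ)).tsum_eq (jf Q x N)
      have hre' : (∑' m : ℤ, jf Q x N (m + 1)) = ∑' m : ℤ, jf Q x N m :=
        (Equiv.addRight (1 : ℤ)).tsum_eq (jf Q x N)
      have hK : (∑' m : ℤ, jf Q x (N + 1) m)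
          = ∑' m : ℤ, ((1 + Q ^ (4 * N + 2)) * jf Q x N m
            + (Q ^ (2 * N + 1) * x) * jf Q x N (m - 1)
            + (Q ^ (2 * N + 1) * x⁻¹) * jf Q x N (m + 1)) := tsum_congr key
      rw [hK, Summable.tsum_add (s1.add s2) s3, Summable.tsum_add s1 s2,
        tsum_mul_left, tsum_mul_left, tsum_mul_left, hre, hre']
      field_simp
      ring


lemma log_summable {a q : ℂ} (hq : ‖q‖ < 1) :
    Summable (fun n : ℕ => Complex.log (1 - a * q ^ n)) := by
  apply Summable.of_norm_bounded_eventually_nat (g := fun n => 3 / 2 * (‖a‖ * ‖q‖ ^ n))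
  · exact ((summable_geometric_of_lt_one (norm_nonneg q) hq).mul_left ‖a‖).mul_left _
  · have h0 : Filter.Tendsto (fun n : ℕ => a * q ^ n) atTop (𝓝 0) := by
      simpa using (tendsto_pow_atTop_nhds_zero_of_norm_lt_one hq).const_mul a
    have hev : ∀ᶠ n : ℕ in atTop, ‖a * q ^ n‖ ≤ 1 / 2 := by
      have := h0.eventually (Metric.ball_mem_nhds (0 : ℂ) (by norm_num : (0:ℝ) < 1/2))
      filter_upwards [this] with n hn
      rw [dist_zero_right] at hn
      exact hn.le
    filter_upwards [hev] with n hn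
    have : (1 : ℂ) - a * q ^ n = 1 + (-(a * q ^ n)) := by ring
    rw [this]
    calc ‖Complex.log (1 + (-(a * q ^ n)))‖ ≤ 3 / 2 * ‖-(a * q ^ n)‖ :=
          Complex.norm_log_one_add_half_le_self (by rwa [norm_neg])
      _ ≤ 3 / 2 * (‖a‖ * ‖q‖ ^ n) := by rw [norm_neg, norm_mul, norm_pow]

lemma mult_one_sub {a q : ℂ} (hq : ‖q‖ < 1) : Multipliable (fun n : ℕ => 1 - a * q ^ n) := by
  by_cases hz : ∃ n, (1 : ℂ) - a * q ^ n = 0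
  · obtain ⟨n₀, h0⟩ := hz
    refine ⟨0, ?_⟩
    rw [HasProd]
    refine tendsto_const_nhds.congr' ?_
    filter_upwards [Filter.eventually_ge_atTop ({n₀} : Finset ℕ)] with s hs
    exact (Finset.prod_eq_zero (hs (Finset.mem_singleton_self n₀)) h0).symm
  · push_neg at hz
    exact Complex.multipliable_of_summable_log (log_summable hq)

lemma qPochInf_ne_zero {q : ℂ} (hq : ‖q‖ < 1) : qPochInf q q ≠ 0 := by
  have hz : ∀ n : ℕ, (1 : ℂ) - q * q ^ n ≠ 0 := by
    intro n
    have := one_sub_pow_ne hq n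
    rwa [pow_succ'] at this
  have := Complex.cexp_tsum_eq_tprod (f := fun n => 1 - q * q ^ n) hz (log_summable hq)
  rw [qPochInf, ← this]
  exact Complex.exp_ne_zero _

lemma qfac_eq_prod (q : ℂ) (n : ℕ) : qfac q n = ∏ j ∈ Finset.range n, (1 - q * q ^ j) := by
  refine Finset.prod_congr rfl fun j _ => ?_
  rw [pow_succ']

lemma tendsto_qfac {q : ℂ} (hq : ‖q‖ < 1) :
    Filter.Tendsto (fun n => qfac q n) atTop (𝓝 (qPochInf q q)) := by
  have h := (mult_one_sub (a := q) hq).hasProd.tendsto_prod_nat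
  refine h.congr fun n => (qfac_eq_prod q n).symm

lemma tendsto_qfac2 {q : ℂ} (hq : ‖q‖ < 1) :
    Filter.Tendsto (fun N => qfac q (2 * N)) atTop (𝓝 (qPochInf q q)) :=
  (tendsto_qfac hq).comp (Filter.tendsto_atTop_atTop.2 fun b => ⟨b, fun a ha => by omega⟩)

section RealBounds
variable {q : ℂ}

/-- uniform upper bound for `‖qfac q n‖`. -/
lemma qfac_norm_ub (hq : ‖q‖ < 1) (n : ℕ) :
    ‖qfac q n‖ ≤ Real.exp ((1 - ‖q‖)⁻¹) := by
  set r := ‖q‖ with hr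
  have hr0 : 0 ≤ r := norm_nonneg q
  have h1 : ‖qfac q n‖ ≤ ∏ j ∈ Finset.range n, (1 + r ^ (j + 1)) := by
    rw [qfac]
    calc ‖∏ j ∈ Finset.range n, ((1:ℂ) - q ^ (j+1))‖
        = ∏ j ∈ Finset.range n, ‖(1:ℂ) - q ^ (j+1)‖ := norm_prod _ _
      _ ≤ ∏ j ∈ Finset.range n, (1 + r ^ (j + 1)) := by
          refine Finset.prod_le_prod (fun j _ => norm_nonneg _) fun j _ => ?_
          calc ‖(1:ℂ) - q ^ (j+1)‖ ≤ ‖(1:ℂ)‖ + ‖q ^ (j+1)‖ := norm_sub_le _ _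
            _ = 1 + r ^ (j+1) := by rw [norm_one, norm_pow]
  refine h1.trans ?_
  have h2 : ∏ j ∈ Finset.range n, (1 + r ^ (j + 1))
      ≤ ∏ j ∈ Finset.range n, Real.exp (r ^ (j + 1)) := by
    refine Finset.prod_le_prod (fun j _ => by positivity) fun j _ => ?_
    have := Real.add_one_le_exp (r ^ (j + 1))
    linarith
  refine h2.trans ?_
  rw [← Real.exp_sum]
  refine Real.exp_le_exp.2 ?_
  calc ∑ j ∈ Finset.range n, r ^ (j + 1) ≤ ∑ j ∈ Finset.range n, r ^ j := by
        refine Finset.sum_le_sum fun j _ => ?_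
        exact pow_le_pow_of_le_one hr0 hq.le (Nat.le_succ j)
    _ ≤ ∑' j : ℕ, r ^ j := Summable.sum_le_tsum _ (fun j _ => by positivity)
          (summable_geometric_of_lt_one hr0 hq)
    _ = (1 - r)⁻¹ := tsum_geometric_of_lt_one hr0 hq

/-- The positive uniform lower bound for `‖qfac q n‖`. -/
noncomputable def Tlow (r : ℝ) : ℝ := ∏' j : ℕ, (1 - r * r ^ j)

lemma Tlow_lemmas (hq : ‖q‖ < 1) :
    0 < Tlow ‖q‖ ∧ ∀ n, Tlow ‖q‖ ≤ ‖qfac q n‖ := by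
  set r := ‖q‖ with hr
  have hr0 : 0 ≤ r := norm_nonneg q
  have hpos : ∀ j : ℕ, 0 < 1 - r * r ^ j := by
    intro j
    have h1 : r * r ^ j = r ^ (j + 1) := (pow_succ' r j).symm
    have h2 : r ^ (j + 1) < 1 := pow_lt_one₀ hr0 hq (Nat.succ_ne_zero j)
    rw [h1]; linarith
  have hsumlog : Summable (fun j : ℕ => Real.log (1 - r * r ^ j)) := by
    apply Summable.of_norm_bounded_eventually_nat (g := fun j => 2 * (r * r ^ j))
    · exact ((summable_geometric_of_lt_one hr0 hq).mul_left r).mul_left 2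
    · have h0 : Filter.Tendsto (fun j : ℕ => r * r ^ j) atTop (𝓝 0) := by
        simpa using (tendsto_pow_atTop_nhds_zero_of_norm_lt_one
          (by rwa [Real.norm_eq_abs, _root_.abs_of_nonneg hr0])).const_mul r
      filter_upwards [h0.eventually (gt_mem_nhds (by norm_num : (0:ℝ) < 1/2))] with j hj
      set t := r * r ^ j with ht
      have ht0 : 0 ≤ t := by positivity
      have ht2 : t < 1/2 := hj
      have h1t : (0:ℝ) < 1 - t := by linarith
      have habs : ‖Real.log (1 - t)‖ = -Real.log (1 - t) := by
        rw [Real.norm_eq_abs, abs_of_nonpos (Real.log_nonpos (by linarith) (by linarith))]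
      rw [habs, ← Real.log_inv]
      have h5 : (1 - t)⁻¹ ≤ 1 + 2 * t := by
        rw [← one_div, div_le_iff₀ h1t]; nlinarith
      have h6 := Real.log_le_sub_one_of_pos (inv_pos.2 h1t)
      linarith
  have hmul : Multipliable (fun j : ℕ => 1 - r * r ^ j) :=
    Real.multipliable_of_summable_log hpos hsumlog
  have hL : Filter.Tendsto (fun n => ∏ j ∈ Finset.range n, (1 - r * r ^ j)) atTop
      (𝓝 (Tlow r)) := hmul.hasProd.tendsto_prod_nat
  have hTpos : 0 < Tlow r := by
    have := Real.rexp_tsum_eq_tprod (f := fun j => 1 - r * r ^ j) hpos hsumlog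
    rw [Tlow, ← this]
    exact Real.exp_pos _
  have hanti : Antitone (fun n => ∏ j ∈ Finset.range n, (1 - r * r ^ j)) := by
    refine antitone_nat_of_succ_le fun n => ?_
    rw [Finset.prod_range_succ]
    have hp : 0 < ∏ j ∈ Finset.range n, (1 - r * r ^ j) :=
      Finset.prod_pos fun j _ => hpos j
    have : r * r ^ n ≥ 0 := by positivity
    exact mul_le_of_le_one_right hp.le (by linarith)
  have hTle : ∀ n, Tlow r ≤ ∏ j ∈ Finset.range n, (1 - r * r ^ j) :=
    hanti.le_of_tendsto hL
  refine ⟨hTpos, fun n => ?_⟩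
  refine (hTle n).trans ?_
  rw [qfac]
  calc ∏ j ∈ Finset.range n, (1 - r * r ^ j)
      ≤ ∏ j ∈ Finset.range n, ‖(1:ℂ) - q ^ (j+1)‖ := by
        refine Finset.prod_le_prod (fun j _ => (hpos j).le) fun j _ => ?_
        have h1 := norm_sub_norm_le (1:ℂ) (q ^ (j+1))
        rw [norm_one, norm_pow] at h1
        rw [← hr] at h1
        have : r ^ (j+1) = r * r ^ j := pow_succ' r j
        linarith
    _ = ‖∏ j ∈ Finset.range n, ((1:ℂ) - q ^ (j+1))‖ := (norm_prod _ _).symm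
end RealBounds

lemma wBq_bound {q : ℂ} (hq : ‖q‖ < 1) (n : ℕ) (k : ℤ) :
    ‖qfac q n * Bq q n k‖ ≤ Real.exp ((1 - ‖q‖)⁻¹) ^ 2 / (Tlow ‖q‖) ^ 2 := by
  obtain ⟨hTpos, hTle⟩ := Tlow_lemmas hq
  have hCu : ∀ j : ℕ, ‖qfac q j‖ ≤ Real.exp ((1 - ‖q‖)⁻¹) := qfac_norm_ub hq
  have hCupos : (0:ℝ) < Real.exp ((1 - ‖q‖)⁻¹) := Real.exp_pos _
  by_cases hk : 0 ≤ k ∧ k ≤ (n : ℤ)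
  · rw [Bq, if_pos hk]
    rw [mul_div_assoc', norm_div, norm_mul, norm_mul]
    have h1 : ‖qfac q n‖ * ‖qfac q n‖ ≤ Real.exp ((1 - ‖q‖)⁻¹) ^ 2 := by
      rw [sq]
      exact mul_le_mul (hCu n) (hCu n) (norm_nonneg _) hCupos.le
    have h2 : (Tlow ‖q‖) ^ 2 ≤ ‖qfac q k.toNat‖ * ‖qfac q (n - k.toNat)‖ := by
      rw [sq]
      exact mul_le_mul (hTle _) (hTle _) hTpos.le (norm_nonneg _)
    exact div_le_div₀ (by positivity) h1 (by positivity) h2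
  · rw [Bq, if_neg hk, mul_zero, norm_zero]
    positivity

lemma wBq_tendsto {q : ℂ} (hq : ‖q‖ < 1) (m : ℤ) :
    Filter.Tendsto (fun N : ℕ => qfac q (2 * N) * Bq q (2 * N) ((N : ℤ) + m)) atTop (𝓝 1) := by
  set A := qPochInf q q with hA
  have hAne : A ≠ 0 := qPochInf_ne_zero hq
  have t1 : Filter.Tendsto (fun N : ℕ => qfac q (2 * N)) atTop (𝓝 A) := tendsto_qfac2 hq
  have comp1 : Filter.Tendsto (fun N : ℕ => ((N : ℤ) + m).toNat) atTop atTop :=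
    Filter.tendsto_atTop_atTop.2 fun b => ⟨b + m.natAbs, fun a ha => by omega⟩
  have comp2 : Filter.Tendsto (fun N : ℕ => ((N : ℤ) - m).toNat) atTop atTop :=
    Filter.tendsto_atTop_atTop.2 fun b => ⟨b + m.natAbs, fun a ha => by omega⟩
  have t2 : Filter.Tendsto (fun N : ℕ => qfac q (((N : ℤ) + m).toNat)) atTop (𝓝 A) :=
    (tendsto_qfac hq).comp comp1
  have t3 : Filter.Tendsto (fun N : ℕ => qfac q (((N : ℤ) - m).toNat)) atTop (𝓝 A) :=
    (tendsto_qfac hq).comp comp2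
  have tD : Filter.Tendsto (fun N : ℕ => qfac q (2 * N) * qfac q (2 * N)
      / (qfac q (((N : ℤ) + m).toNat) * qfac q (((N : ℤ) - m).toNat))) atTop
      (𝓝 (A * A / (A * A))) := (t1.mul t1).div (t2.mul t3) (mul_ne_zero hAne hAne)
  rw [div_self (mul_ne_zero hAne hAne)] at tD
  refine tD.congr' ?_
  filter_upwards [Filter.eventually_ge_atTop m.natAbs] with N hN
  have hk : 0 ≤ (N : ℤ) + m ∧ (N : ℤ) + m ≤ ((2 * N : ℕ) : ℤ) := by
    constructor <;> [omega; (push_cast; omega)]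
  have hsub : 2 * N - ((N : ℤ) + m).toNat = ((N : ℤ) - m).toNat := by omega
  rw [Bq, if_pos hk, hsub, mul_div_assoc']

lemma bound_summable {t X C : ℝ} (ht0 : 0 ≤ t) (ht : t < 1) (hX : 0 ≤ X) (hC : 0 ≤ C) :
    Summable (fun m : ℤ => C * (t ^ m.natAbs ^ 2 * X ^ m.natAbs)) := by
  have hnat : Summable (fun n : ℕ => C * (t ^ n ^ 2 * X ^ n)) := by
    have h0 : Filter.Tendsto (fun n : ℕ => t ^ n * X) atTop (𝓝 0) := by
      simpa using (tendsto_pow_atTop_nhds_zero_of_norm_lt_one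
        (by rwa [Real.norm_eq_abs, _root_.abs_of_nonneg ht0])).mul_const X
    obtain ⟨N₀, hN₀⟩ := Filter.eventually_atTop.1
      (h0.eventually (gt_mem_nhds (by norm_num : (0:ℝ) < 1/2)))
    apply Summable.of_norm_bounded_eventually_nat (g := fun n => C * (1/2) ^ n)
      ((summable_geometric_of_lt_one (by norm_num) (by norm_num)).mul_left C)
    filter_upwards [Filter.eventually_ge_atTop N₀] with n hn
    have key : t ^ n ^ 2 * X ^ n = (t ^ n * X) ^ n := by
      rw [mul_pow, ← pow_mul, sq]
    have h1 : t ^ n * X ≤ 1 / 2 := (hN₀ n hn).le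
    have h2 : 0 ≤ t ^ n * X := by positivity
    rw [Real.norm_eq_abs, _root_.abs_of_nonneg (by positivity), key]
    exact mul_le_mul_of_nonneg_left (pow_le_pow_left₀ h2 h1 n) hC
  apply Summable.of_nat_of_neg
  · exact hnat.congr fun n => by simp
  · exact hnat.congr fun n => by simp

lemma zpow_norm_le_natAbs {x : ℂ} (hx0 : x ≠ 0) (m : ℤ) :
    ‖x ^ m‖ ≤ (max ‖x‖ ‖x‖⁻¹) ^ m.natAbs := by
  have hxpos : 0 < ‖x‖ := norm_pos_iff.2 hx0
  rw [norm_zpow]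
  rcases m with n | n
  · rw [Int.ofNat_eq_coe, zpow_natCast]
    exact pow_le_pow_left₀ hxpos.le (le_max_left _ _) n
  · rw [zpow_negSucc, ← inv_pow]
    exact pow_le_pow_left₀ (by positivity) (le_max_right _ _) (n + 1)

theorem jtp_main {Q x : ℂ} (hQ : ‖Q‖ < 1) (hQ0 : Q ≠ 0) (hx0 : x ≠ 0) :
    (∑' m : ℤ, Q ^ (m ^ 2) * x ^ m)
      = qPochInf (Q ^ 2) (Q ^ 2) * qPochInf (-(Q * x)) (Q ^ 2)
        * qPochInf (-(Q * x⁻¹)) (Q ^ 2) := by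
  have hq2 : ‖(Q : ℂ) ^ 2‖ < 1 := by
    rw [norm_pow]; exact pow_lt_one₀ (norm_nonneg Q) hQ two_ne_zero
  set F : ℕ → ℂ := fun N => qfac (Q ^ 2) (2 * N)
    * ∏ n ∈ Finset.range N, ((1 + x * Q ^ (2 * n + 1)) * (1 + x⁻¹ * Q ^ (2 * n + 1))) with hF
  -- left limit: the products
  have TL : Filter.Tendsto F atTop (𝓝 (qPochInf (Q ^ 2) (Q ^ 2)
      * qPochInf (-(Q * x)) (Q ^ 2) * qPochInf (-(Q * x⁻¹)) (Q ^ 2))) := by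
    have t1 : Filter.Tendsto (fun N : ℕ => qfac (Q ^ 2) (2 * N)) atTop
        (𝓝 (qPochInf (Q ^ 2) (Q ^ 2))) := tendsto_qfac2 hq2
    have t2 : Filter.Tendsto
        (fun N : ℕ => ∏ n ∈ Finset.range N, (1 - (-(Q * x)) * ((Q ^ 2)) ^ n)) atTop
        (𝓝 (qPochInf (-(Q * x)) (Q ^ 2))) := (mult_one_sub hq2).hasProd.tendsto_prod_nat
    have t3 : Filter.Tendsto
        (fun N : ℕ => ∏ n ∈ Finset.range N, (1 - (-(Q * x⁻¹)) * ((Q ^ 2)) ^ n)) atTop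
        (𝓝 (qPochInf (-(Q * x⁻¹)) (Q ^ 2))) := (mult_one_sub hq2).hasProd.tendsto_prod_nat
    refine ((t1.mul t2).mul t3).congr fun N => ?_
    rw [hF]
    have e2 : ∀ n : ℕ, (1 : ℂ) - (-(Q * x)) * ((Q ^ 2)) ^ n = 1 + x * Q ^ (2 * n + 1) := by
      intro n; ring
    have e3 : ∀ n : ℕ, (1 : ℂ) - (-(Q * x⁻¹)) * ((Q ^ 2)) ^ n = 1 + x⁻¹ * Q ^ (2 * n + 1) := by
      intro n; ring
    rw [Finset.prod_congr rfl fun n _ => e2 n, Finset.prod_congr rfl fun n _ => e3 n,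
      mul_assoc, ← Finset.prod_mul_distrib]
  -- right limit: Tannery
  have hFsum : ∀ N, F N = ∑' m : ℤ, qfac (Q ^ 2) (2 * N) * jf Q x N m := by
    intro N
    simp only [hF]
    rw [finite_jtp hQ hQ0 hx0 N, tsum_mul_left]
  have TR : Filter.Tendsto F atTop (𝓝 (∑' m : ℤ, Q ^ (m ^ 2) * x ^ m)) := by
    rw [show F = fun N => ∑' m : ℤ, qfac (Q ^ 2) (2 * N) * jf Q x N m from funext hFsum]
    set C : ℝ := Real.exp ((1 - ‖(Q : ℂ) ^ 2‖)⁻¹) ^ 2 / (Tlow ‖(Q : ℂ) ^ 2‖) ^ 2 with hC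
    have hTpos := (Tlow_lemmas hq2).1
    have hCpos : 0 < C := by positivity
    set X : ℝ := max ‖x‖ ‖x‖⁻¹ with hX
    have hX0 : 0 ≤ X := le_max_of_le_left (norm_nonneg x)
    apply tendsto_tsum_of_dominated_convergence
      (bound := fun m : ℤ => C * (‖Q‖ ^ m.natAbs ^ 2 * X ^ m.natAbs))
      (bound_summable (norm_nonneg Q) hQ hX0 hCpos.le)
    · intro m
      have h1 := (wBq_tendsto hq2 m).mul_const (Q ^ (m ^ 2) * x ^ m)
      rw [one_mul] at h1
      refine h1.congr fun N => ?_
      rw [jf, mul_assoc]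
    · refine Filter.Eventually.of_forall fun N m => ?_
      have e : ‖qfac (Q ^ 2) (2 * N) * jf Q x N m‖
          = ‖qfac (Q ^ 2) (2 * N) * Bq (Q ^ 2) (2 * N) ((N : ℤ) + m)‖ * ‖Q ^ (m ^ 2)‖
            * ‖x ^ m‖ := by
        rw [jf, show qfac (Q ^ 2) (2 * N) * (Bq (Q ^ 2) (2 * N) ((N : ℤ) + m)
          * (Q ^ (m ^ 2) * x ^ m)) = qfac (Q ^ 2) (2 * N) * Bq (Q ^ 2) (2 * N) ((N : ℤ) + m)
          * Q ^ (m ^ 2) * x ^ m by ring, norm_mul, norm_mul]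
      rw [e]
      have hQm : ‖Q ^ (m ^ 2)‖ = ‖Q‖ ^ m.natAbs ^ 2 := by
        rw [norm_zpow, show (m ^ 2 : ℤ) = ((m.natAbs ^ 2 : ℕ) : ℤ) from (Int.natAbs_sq m).symm,
          zpow_natCast]
      calc ‖qfac (Q ^ 2) (2 * N) * Bq (Q ^ 2) (2 * N) ((N : ℤ) + m)‖ * ‖Q ^ (m ^ 2)‖
            * ‖x ^ m‖
          ≤ C * (‖Q‖ ^ m.natAbs ^ 2) * X ^ m.natAbs := by
            refine mul_le_mul (mul_le_mul (wBq_bound hq2 (2 * N) _) hQm.le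
              (norm_nonneg _) hCpos.le) (zpow_norm_le_natAbs hx0 m) (norm_nonneg _) ?_
            positivity
        _ = C * (‖Q‖ ^ m.natAbs ^ 2 * X ^ m.natAbs) := by ring
  exact tendsto_nhds_unique TR TL

/-- Jacobi triple product identity: for `τ` in the upper half plane and
`q = exp(2πiτ)`, the theta function `ϑ_τ(z) = ∑_{m∈ℤ} q^{m²/2} e^{2πimz}`
equals `(q;q)_∞ (-q^{1/2} e^{2πiz};q)_∞ (-q^{1/2} e^{-2πiz};q)_∞`. -/
theorem jacobi_triple_product (τ : ℂ) (hτ : 0 < τ.im)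
    (q : ℂ) (hq : q = Complex.exp (2 * (π : ℂ) * Complex.I * τ)) (z : ℂ) :
    (∑' m : ℤ, Complex.exp ((π : ℂ) * Complex.I * τ * (m : ℂ) ^ 2)
        * Complex.exp (2 * (π : ℂ) * Complex.I * (m : ℂ) * z)) =
      qPochInf q q *
      qPochInf (-(Complex.exp ((π : ℂ) * Complex.I * τ))
        * Complex.exp (2 * (π : ℂ) * Complex.I * z)) q *
      qPochInf (-(Complex.exp ((π : ℂ) * Complex.I * τ))
        * Complex.exp (-(2 * (π : ℂ) * Complex.I * z))) q := by
  have hQ0 : Complex.exp ((π : ℂ) * Complex.I * τ) ≠ 0 := Complex.exp_ne_zero _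
  have hx0 : Complex.exp (2 * (π : ℂ) * Complex.I * z) ≠ 0 := Complex.exp_ne_zero _
  have hre : (((π : ℂ)) * Complex.I * τ).re = -(π * τ.im) := by
    simp [Complex.mul_re, Complex.mul_im]
  have hQ : ‖Complex.exp ((π : ℂ) * Complex.I * τ)‖ < 1 := by
    rw [Complex.norm_exp, hre]
    rw [Real.exp_lt_one_iff]
    have := Real.pi_pos
    nlinarith
  have hqQ : q = (Complex.exp ((π : ℂ) * Complex.I * τ)) ^ 2 := by
    rw [hq, sq, ← Complex.exp_add]; congr 1; ring
  have hinv : Complex.exp (-(2 * (π : ℂ) * Complex.I * z))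
      = (Complex.exp (2 * (π : ℂ) * Complex.I * z))⁻¹ := Complex.exp_neg _
  have h1 : ∀ m : ℤ,
      Complex.exp ((π : ℂ) * Complex.I * τ * (m : ℂ) ^ 2)
        * Complex.exp (2 * (π : ℂ) * Complex.I * (m : ℂ) * z)
      = (Complex.exp ((π : ℂ) * Complex.I * τ)) ^ (m ^ 2)
        * (Complex.exp (2 * (π : ℂ) * Complex.I * z)) ^ m := by
    intro m
    rw [← Complex.exp_int_mul, ← Complex.exp_int_mul]
    congr 1 <;> push_cast <;> ring
  rw [tsum_congr h1, hqQ, hinv, neg_mul, neg_mul]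
  exact jtp_main hQ hQ0 hx0
end

section
/- (Doubling identity for the τ-shifted factorial) For τ ∈ ℍ and z ∈ ℂ, the τ-shifted factorial [z;τ]_∞ = (exp(-2πiz); q̃)_∞ / (q^z; q)_∞ satisfies [1/2 + x, 1/2 - x, 1 + x, 1 - x, 1/2 + 1/(2τ) + x, 1/2 + 1/(2τ) - x, 1 + 1/(2τ) + x, 1 + 1/(2τ) - x; τ]_∞ = [1 + 2x; τ]_∞ · [1 - 2x; τ]_∞, where a product of τ-shifted factorials over several arguments denotes the product of individual factors. -/
open scoped Real

/-- The τ-shifted factorial `[z;τ]_∞ = (exp(-2πiz);q̃)_∞ / (q^z;q)_∞` with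
`q = exp(2πiτ)` and `q̃ = exp(-2πi/τ)`. -/
noncomputable def tauShifted (τ z : ℂ) : ℂ :=
  qPochInf (Complex.exp (-(2 * (π : ℂ) * Complex.I * z)))
      (Complex.exp (-(2 * (π : ℂ) * Complex.I) / τ)) /
    qPochInf (Complex.exp (2 * (π : ℂ) * Complex.I * τ * z))
      (Complex.exp (2 * (π : ℂ) * Complex.I * τ))

section auxlemmas

lemma multipliable_of_eq_zero {f : ℕ → ℂ} {n₀ : ℕ} (h : f n₀ = 0) : Multipliable f := by
  refine ⟨0, ?_⟩
  unfold HasProd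
  refine Filter.Tendsto.congr' ?_ tendsto_const_nhds
  filter_upwards [Filter.eventually_ge_atTop ({n₀} : Finset ℕ)] with s hs
  exact (Finset.prod_eq_zero (hs (Finset.mem_singleton_self n₀)) h).symm

lemma summable_log_qp (a q : ℂ) (hq : ‖q‖ < 1) :
    Summable (fun n : ℕ => Complex.log (1 - a * q ^ n)) := by
  have hg : Summable (fun n : ℕ => (3/2 : ℝ) * (‖a‖ * ‖q‖ ^ n)) :=
    ((summable_geometric_of_lt_one (norm_nonneg q) hq).mul_left ‖a‖).mul_left _
  refine Summable.of_norm_bounded_eventually_nat hg ?_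
  have htend : Filter.Tendsto (fun n : ℕ => ‖a‖ * ‖q‖ ^ n) Filter.atTop (nhds 0) := by
    simpa using (tendsto_pow_atTop_nhds_zero_of_norm_lt_one (by simpa using hq)).const_mul ‖a‖
  filter_upwards [htend.eventually_le_const (by norm_num : (0:ℝ) < 1/2)] with n hn
  have h1 : ‖-(a * q ^ n)‖ ≤ 1/2 := by
    rw [norm_neg, norm_mul, norm_pow]; exact hn
  have := Complex.norm_log_one_add_half_le_self h1
  rw [show (1 : ℂ) + -(a * q ^ n) = 1 - a * q ^ n by ring] at this
  simpa [norm_mul, norm_pow] using this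

lemma multipliable_qp (a q : ℂ) (hq : ‖q‖ < 1) :
    Multipliable (fun n : ℕ => 1 - a * q ^ n) := by
  by_cases h : ∃ n, 1 - a * q ^ n = 0
  · exact multipliable_of_eq_zero h.choose_spec
  · push_neg at h
    exact Complex.multipliable_of_summable_log (summable_log_qp a q hq)

lemma pochA (a r : ℂ) (hr : ‖r‖ < 1) :
    qPochInf a (r^2) * qPochInf (a*r) (r^2) = qPochInf a r := by
  have h2 : ‖r^2‖ < 1 := by
    rw [norm_pow]
    exact pow_lt_one₀ (norm_nonneg r) hr two_ne_zero
  have he : Multipliable (fun k : ℕ => 1 - a * r ^ (2*k)) :=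
    (multipliable_qp a (r^2) h2).congr (fun n => by rw [← pow_mul])
  have ho : Multipliable (fun k : ℕ => 1 - a * r ^ (2*k+1)) :=
    (multipliable_qp (a*r) (r^2) h2).congr (fun n => by
      rw [← pow_mul, pow_succ]; ring)
  unfold qPochInf
  rw [← tprod_even_mul_odd (f := fun n => 1 - a * r ^ n) he ho]
  congr 1
  · exact tprod_congr fun k => by rw [← pow_mul]
  · exact tprod_congr fun k => by rw [← pow_mul, pow_succ]; ring

lemma pochB (a q : ℂ) (hq : ‖q‖ < 1) :
    qPochInf a q * qPochInf (-a) q = qPochInf (a^2) (q^2) := by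
  unfold qPochInf
  rw [← Multipliable.tprod_mul (multipliable_qp a q hq) (multipliable_qp (-a) q hq)]
  exact tprod_congr fun n => by
    have : (q^2)^n = (q^n)^2 := by rw [← pow_mul, ← pow_mul, mul_comm]
    rw [this]; ring

lemma pochQuad (u s : ℂ) (hs : ‖s‖ < 1) :
    qPochInf u (s^2) * qPochInf (-u) (s^2) * qPochInf (s*u) (s^2) *
      qPochInf (-(s*u)) (s^2) = qPochInf (u^2) (s^2) := by
  have h1 := pochA u s hs
  have h2 := pochA (-u) s hs
  have h3 := pochB u s hs
  rw [show u * s = s * u by ring] at h1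
  rw [show -u * s = -(s*u) by ring] at h2
  calc qPochInf u (s^2) * qPochInf (-u) (s^2) * qPochInf (s*u) (s^2) * qPochInf (-(s*u)) (s^2)
      = (qPochInf u (s^2) * qPochInf (s*u) (s^2)) *
        (qPochInf (-u) (s^2) * qPochInf (-(s*u)) (s^2)) := by ring
    _ = qPochInf u s * qPochInf (-u) s := by rw [h1, h2]
    _ = qPochInf (u^2) (s^2) := h3

end auxlemmas

/-- The doubling identity for the τ-shifted factorial:
`[1/2±x, 1±x, 1/2+1/(2τ)±x, 1+1/(2τ)±x; τ]_∞ = [1+2x;τ]_∞ [1-2x;τ]_∞`. -/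
theorem tauShifted_doubling (τ : ℂ) (hτ : 0 < τ.im) (x : ℂ) :
    tauShifted τ (1 / 2 + x) * tauShifted τ (1 / 2 - x) *
    tauShifted τ (1 + x) * tauShifted τ (1 - x) *
    tauShifted τ (1 / 2 + 1 / (2 * τ) + x) * tauShifted τ (1 / 2 + 1 / (2 * τ) - x) *
    tauShifted τ (1 + 1 / (2 * τ) + x) * tauShifted τ (1 + 1 / (2 * τ) - x) =
    tauShifted τ (1 + 2 * x) * tauShifted τ (1 - 2 * x) := by

  have hτ0 : τ ≠ 0 := fun h => by simp [h] at hτ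
  have hpi : Complex.exp ((π:ℂ) * Complex.I) = -1 := Complex.exp_pi_mul_I
  have h2pi : Complex.exp (-(2 * (π:ℂ) * Complex.I)) = 1 := by
    rw [Complex.exp_neg, Complex.exp_two_pi_mul_I, inv_one]
  -- norms of the half-period bases
  have hre1 : ((π:ℂ) * Complex.I * τ).re = -(π * τ.im) := by
    simp [Complex.mul_re]
  have hrn : ‖Complex.exp ((π:ℂ) * Complex.I * τ)‖ < 1 := by
    rw [Complex.norm_exp, hre1]
    exact Real.exp_lt_one_iff.mpr (by nlinarith [Real.pi_pos])
  have hre2 : ((-((π:ℂ) * Complex.I)) / τ).re = -(π * τ.im) / Complex.normSq τ := by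
    rw [Complex.div_re]
    simp [Complex.mul_re]
  have hsn : ‖Complex.exp (-((π:ℂ) * Complex.I) / τ)‖ < 1 := by
    rw [Complex.norm_exp, hre2]
    refine Real.exp_lt_one_iff.mpr (div_neg_of_neg_of_pos (by nlinarith [Real.pi_pos])
      (Complex.normSq_pos.mpr hτ0))
  -- base rewrites
  have eb1 : Complex.exp (2 * (π:ℂ) * Complex.I * τ)
      = Complex.exp ((π:ℂ) * Complex.I * τ) ^ 2 := by
    rw [show 2 * (π:ℂ) * Complex.I * τ = (π:ℂ) * Complex.I * τ + (π:ℂ) * Complex.I * τ by ring,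
      Complex.exp_add]; ring
  have eb2 : Complex.exp (-(2 * (π:ℂ) * Complex.I) / τ)
      = Complex.exp (-((π:ℂ) * Complex.I) / τ) ^ 2 := by
    rw [show -(2 * (π:ℂ) * Complex.I) / τ
        = -((π:ℂ) * Complex.I) / τ + -((π:ℂ) * Complex.I) / τ by ring,
      Complex.exp_add]; ring
  -- denominator arguments
  have d1 : Complex.exp (2 * (π:ℂ) * Complex.I * τ * (1 / 2 + x))
      = Complex.exp ((π:ℂ) * Complex.I * τ) * Complex.exp (2 * (π:ℂ) * Complex.I * τ * x) := by
    rw [show 2 * (π:ℂ) * Complex.I * τ * (1 / 2 + x)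
        = (π:ℂ) * Complex.I * τ + 2 * (π:ℂ) * Complex.I * τ * x by ring, Complex.exp_add]
  have d2 : Complex.exp (2 * (π:ℂ) * Complex.I * τ * (1 / 2 - x))
      = Complex.exp ((π:ℂ) * Complex.I * τ) * Complex.exp (-(2 * (π:ℂ) * Complex.I * τ * x)) := by
    rw [show 2 * (π:ℂ) * Complex.I * τ * (1 / 2 - x)
        = (π:ℂ) * Complex.I * τ + -(2 * (π:ℂ) * Complex.I * τ * x) by ring, Complex.exp_add]
  have d3 : Complex.exp (2 * (π:ℂ) * Complex.I * τ * (1 + x))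
      = Complex.exp ((π:ℂ) * Complex.I * τ) ^ 2
        * Complex.exp (2 * (π:ℂ) * Complex.I * τ * x) := by
    rw [show 2 * (π:ℂ) * Complex.I * τ * (1 + x)
        = (π:ℂ) * Complex.I * τ + ((π:ℂ) * Complex.I * τ + 2 * (π:ℂ) * Complex.I * τ * x) by ring,
      Complex.exp_add, Complex.exp_add]; ring
  have d4 : Complex.exp (2 * (π:ℂ) * Complex.I * τ * (1 - x))
      = Complex.exp ((π:ℂ) * Complex.I * τ) ^ 2
        * Complex.exp (-(2 * (π:ℂ) * Complex.I * τ * x)) := by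
    rw [show 2 * (π:ℂ) * Complex.I * τ * (1 - x)
        = (π:ℂ) * Complex.I * τ
          + ((π:ℂ) * Complex.I * τ + -(2 * (π:ℂ) * Complex.I * τ * x)) by ring,
      Complex.exp_add, Complex.exp_add]; ring
  have d5 : Complex.exp (2 * (π:ℂ) * Complex.I * τ * (1 / 2 + 1 / (2 * τ) + x))
      = -(Complex.exp ((π:ℂ) * Complex.I * τ)
          * Complex.exp (2 * (π:ℂ) * Complex.I * τ * x)) := by
    rw [show 2 * (π:ℂ) * Complex.I * τ * (1 / 2 + 1 / (2 * τ) + x)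
        = (π:ℂ) * Complex.I
          + ((π:ℂ) * Complex.I * τ + 2 * (π:ℂ) * Complex.I * τ * x) by field_simp; ring,
      Complex.exp_add, Complex.exp_add, hpi]; ring
  have d6 : Complex.exp (2 * (π:ℂ) * Complex.I * τ * (1 / 2 + 1 / (2 * τ) - x))
      = -(Complex.exp ((π:ℂ) * Complex.I * τ)
          * Complex.exp (-(2 * (π:ℂ) * Complex.I * τ * x))) := by
    rw [show 2 * (π:ℂ) * Complex.I * τ * (1 / 2 + 1 / (2 * τ) - x)
        = (π:ℂ) * Complex.I
          + ((π:ℂ) * Complex.I * τ + -(2 * (π:ℂ) * Complex.I * τ * x)) by field_simp; ring,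
      Complex.exp_add, Complex.exp_add, hpi]; ring
  have d7 : Complex.exp (2 * (π:ℂ) * Complex.I * τ * (1 + 1 / (2 * τ) + x))
      = -(Complex.exp ((π:ℂ) * Complex.I * τ) ^ 2
          * Complex.exp (2 * (π:ℂ) * Complex.I * τ * x)) := by
    rw [show 2 * (π:ℂ) * Complex.I * τ * (1 + 1 / (2 * τ) + x)
        = (π:ℂ) * Complex.I + ((π:ℂ) * Complex.I * τ
          + ((π:ℂ) * Complex.I * τ + 2 * (π:ℂ) * Complex.I * τ * x)) by field_simp; ring,
      Complex.exp_add, Complex.exp_add, Complex.exp_add, hpi]; ring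
  have d8 : Complex.exp (2 * (π:ℂ) * Complex.I * τ * (1 + 1 / (2 * τ) - x))
      = -(Complex.exp ((π:ℂ) * Complex.I * τ) ^ 2
          * Complex.exp (-(2 * (π:ℂ) * Complex.I * τ * x))) := by
    rw [show 2 * (π:ℂ) * Complex.I * τ * (1 + 1 / (2 * τ) - x)
        = (π:ℂ) * Complex.I + ((π:ℂ) * Complex.I * τ
          + ((π:ℂ) * Complex.I * τ + -(2 * (π:ℂ) * Complex.I * τ * x))) by field_simp; ring,
      Complex.exp_add, Complex.exp_add, Complex.exp_add, hpi]; ring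
  have d9 : Complex.exp (2 * (π:ℂ) * Complex.I * τ * (1 + 2 * x))
      = Complex.exp ((π:ℂ) * Complex.I * τ) ^ 2
        * Complex.exp (2 * (π:ℂ) * Complex.I * τ * x) ^ 2 := by
    rw [show 2 * (π:ℂ) * Complex.I * τ * (1 + 2 * x)
        = (π:ℂ) * Complex.I * τ + ((π:ℂ) * Complex.I * τ
          + (2 * (π:ℂ) * Complex.I * τ * x + 2 * (π:ℂ) * Complex.I * τ * x)) by ring,
      Complex.exp_add, Complex.exp_add, Complex.exp_add]; ring
  have d10 : Complex.exp (2 * (π:ℂ) * Complex.I * τ * (1 - 2 * x))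
      = Complex.exp ((π:ℂ) * Complex.I * τ) ^ 2
        * Complex.exp (-(2 * (π:ℂ) * Complex.I * τ * x)) ^ 2 := by
    rw [show 2 * (π:ℂ) * Complex.I * τ * (1 - 2 * x)
        = (π:ℂ) * Complex.I * τ + ((π:ℂ) * Complex.I * τ
          + (-(2 * (π:ℂ) * Complex.I * τ * x) + -(2 * (π:ℂ) * Complex.I * τ * x))) by ring,
      Complex.exp_add, Complex.exp_add, Complex.exp_add]; ring
  -- numerator arguments
  have n1 : Complex.exp (-(2 * (π:ℂ) * Complex.I * (1 / 2 + x)))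
      = -Complex.exp (-(2 * (π:ℂ) * Complex.I * x)) := by
    rw [show -(2 * (π:ℂ) * Complex.I * (1 / 2 + x))
        = (π:ℂ) * Complex.I + (-(2 * (π:ℂ) * Complex.I) + -(2 * (π:ℂ) * Complex.I * x)) by ring,
      Complex.exp_add, Complex.exp_add, hpi, h2pi]; ring
  have n2 : Complex.exp (-(2 * (π:ℂ) * Complex.I * (1 / 2 - x)))
      = -Complex.exp (2 * (π:ℂ) * Complex.I * x) := by
    rw [show -(2 * (π:ℂ) * Complex.I * (1 / 2 - x))
        = (π:ℂ) * Complex.I + (-(2 * (π:ℂ) * Complex.I) + 2 * (π:ℂ) * Complex.I * x) by ring,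
      Complex.exp_add, Complex.exp_add, hpi, h2pi]; ring
  have n3 : Complex.exp (-(2 * (π:ℂ) * Complex.I * (1 + x)))
      = Complex.exp (-(2 * (π:ℂ) * Complex.I * x)) := by
    rw [show -(2 * (π:ℂ) * Complex.I * (1 + x))
        = -(2 * (π:ℂ) * Complex.I) + -(2 * (π:ℂ) * Complex.I * x) by ring,
      Complex.exp_add, h2pi]; ring
  have n4 : Complex.exp (-(2 * (π:ℂ) * Complex.I * (1 - x)))
      = Complex.exp (2 * (π:ℂ) * Complex.I * x) := by
    rw [show -(2 * (π:ℂ) * Complex.I * (1 - x))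
        = -(2 * (π:ℂ) * Complex.I) + 2 * (π:ℂ) * Complex.I * x by ring,
      Complex.exp_add, h2pi]; ring
  have n5 : Complex.exp (-(2 * (π:ℂ) * Complex.I * (1 / 2 + 1 / (2 * τ) + x)))
      = -(Complex.exp (-((π:ℂ) * Complex.I) / τ)
          * Complex.exp (-(2 * (π:ℂ) * Complex.I * x))) := by
    rw [show -(2 * (π:ℂ) * Complex.I * (1 / 2 + 1 / (2 * τ) + x))
        = (π:ℂ) * Complex.I + (-(2 * (π:ℂ) * Complex.I)
          + (-((π:ℂ) * Complex.I) / τ + -(2 * (π:ℂ) * Complex.I * x))) by field_simp; ring,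
      Complex.exp_add, Complex.exp_add, Complex.exp_add, hpi, h2pi]; ring
  have n6 : Complex.exp (-(2 * (π:ℂ) * Complex.I * (1 / 2 + 1 / (2 * τ) - x)))
      = -(Complex.exp (-((π:ℂ) * Complex.I) / τ)
          * Complex.exp (2 * (π:ℂ) * Complex.I * x)) := by
    rw [show -(2 * (π:ℂ) * Complex.I * (1 / 2 + 1 / (2 * τ) - x))
        = (π:ℂ) * Complex.I + (-(2 * (π:ℂ) * Complex.I)
          + (-((π:ℂ) * Complex.I) / τ + 2 * (π:ℂ) * Complex.I * x)) by field_simp; ring,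
      Complex.exp_add, Complex.exp_add, Complex.exp_add, hpi, h2pi]; ring
  have n7 : Complex.exp (-(2 * (π:ℂ) * Complex.I * (1 + 1 / (2 * τ) + x)))
      = Complex.exp (-((π:ℂ) * Complex.I) / τ)
          * Complex.exp (-(2 * (π:ℂ) * Complex.I * x)) := by
    rw [show -(2 * (π:ℂ) * Complex.I * (1 + 1 / (2 * τ) + x))
        = -(2 * (π:ℂ) * Complex.I)
          + (-((π:ℂ) * Complex.I) / τ + -(2 * (π:ℂ) * Complex.I * x)) by field_simp; ring,
      Complex.exp_add, Complex.exp_add, h2pi]; ring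
  have n8 : Complex.exp (-(2 * (π:ℂ) * Complex.I * (1 + 1 / (2 * τ) - x)))
      = Complex.exp (-((π:ℂ) * Complex.I) / τ)
          * Complex.exp (2 * (π:ℂ) * Complex.I * x) := by
    rw [show -(2 * (π:ℂ) * Complex.I * (1 + 1 / (2 * τ) - x))
        = -(2 * (π:ℂ) * Complex.I)
          + (-((π:ℂ) * Complex.I) / τ + 2 * (π:ℂ) * Complex.I * x) by field_simp; ring,
      Complex.exp_add, Complex.exp_add, h2pi]; ring
  have n9 : Complex.exp (-(2 * (π:ℂ) * Complex.I * (1 + 2 * x)))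
      = Complex.exp (-(2 * (π:ℂ) * Complex.I * x)) ^ 2 := by
    rw [show -(2 * (π:ℂ) * Complex.I * (1 + 2 * x))
        = -(2 * (π:ℂ) * Complex.I)
          + (-(2 * (π:ℂ) * Complex.I * x) + -(2 * (π:ℂ) * Complex.I * x)) by ring,
      Complex.exp_add, Complex.exp_add, h2pi]; ring
  have n10 : Complex.exp (-(2 * (π:ℂ) * Complex.I * (1 - 2 * x)))
      = Complex.exp (2 * (π:ℂ) * Complex.I * x) ^ 2 := by
    rw [show -(2 * (π:ℂ) * Complex.I * (1 - 2 * x))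
        = -(2 * (π:ℂ) * Complex.I)
          + (2 * (π:ℂ) * Complex.I * x + 2 * (π:ℂ) * Complex.I * x) by ring,
      Complex.exp_add, Complex.exp_add, h2pi]; ring
  simp only [tauShifted]
  rw [d1, d2, d3, d4, d5, d6, d7, d8, d9, d10, n1, n2, n3, n4, n5, n6, n7, n8, n9, n10, eb1, eb2]
  set R := Complex.exp ((π:ℂ) * Complex.I * τ) with hR
  set S := Complex.exp (-((π:ℂ) * Complex.I) / τ) with hS
  set U := Complex.exp (2 * (π:ℂ) * Complex.I * τ * x) with hU
  set U' := Complex.exp (-(2 * (π:ℂ) * Complex.I * τ * x)) with hU'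
  set V := Complex.exp (-(2 * (π:ℂ) * Complex.I * x)) with hV
  set V' := Complex.exp (2 * (π:ℂ) * Complex.I * x) with hV'
  have hDq : ∀ u : ℂ, qPochInf (R*u) (R^2) * qPochInf (-(R*u)) (R^2)
      * qPochInf (R^2*u) (R^2) * qPochInf (-(R^2*u)) (R^2) = qPochInf (R^2*u^2) (R^2) := by
    intro u
    have h := pochQuad (R*u) R hrn
    rw [show R*(R*u) = R^2*u by ring, show (R*u)^2 = R^2*u^2 by ring] at h
    exact h
  simp only [div_mul_div_comm]
  congr 1
  · calc qPochInf (-V) (S^2) * qPochInf (-V') (S^2) * qPochInf V (S^2) * qPochInf V' (S^2)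
        * qPochInf (-(S*V)) (S^2) * qPochInf (-(S*V')) (S^2)
        * qPochInf (S*V) (S^2) * qPochInf (S*V') (S^2)
        = (qPochInf V (S^2) * qPochInf (-V) (S^2) * qPochInf (S*V) (S^2)
            * qPochInf (-(S*V)) (S^2))
          * (qPochInf V' (S^2) * qPochInf (-V') (S^2) * qPochInf (S*V') (S^2)
            * qPochInf (-(S*V')) (S^2)) := by ring
      _ = qPochInf (V^2) (S^2) * qPochInf (V'^2) (S^2) := by
          rw [pochQuad V S hsn, pochQuad V' S hsn]
  · calc qPochInf (R*U) (R^2) * qPochInf (R*U') (R^2) * qPochInf (R^2*U) (R^2)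
        * qPochInf (R^2*U') (R^2) * qPochInf (-(R*U)) (R^2) * qPochInf (-(R*U')) (R^2)
        * qPochInf (-(R^2*U)) (R^2) * qPochInf (-(R^2*U')) (R^2)
        = (qPochInf (R*U) (R^2) * qPochInf (-(R*U)) (R^2) * qPochInf (R^2*U) (R^2)
            * qPochInf (-(R^2*U)) (R^2))
          * (qPochInf (R*U') (R^2) * qPochInf (-(R*U')) (R^2) * qPochInf (R^2*U') (R^2)
            * qPochInf (-(R^2*U')) (R^2)) := by ring
      _ = qPochInf (R^2*U^2) (R^2) * qPochInf (R^2*U'^2) (R^2) := by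
          rw [hDq U, hDq U']
end
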